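/- The normalizer in PGL_3(k̄) of the group generated by diag(1, ζ₁₀², ζ₁₀⁵) (an element of order 10) is the group D(k̄) of all diagonal matrices in PGL_3(k̄). -/

import Mathlib

open Matrix

/-- The normalizer in `PGL₃(k̄)` of the group generated by `diag(1, ζ₁₀², ζ₁₀⁵)` (an element of
order `10`, `ζ₁₀` a primitive 10th root of unity) is the group of diagonal matrices: an
invertible matrix `M` conjugates `diag(1,ζ₁₀²,ζ₁₀⁵)` into the subgroup it generates (up to
scalars) if and only if `M` is diagonal. -/
theorem normalizer_of_order_ten_diagonal {k : Type*} [Field k] [IsAlgClosed k]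
    (hchar : ∀ p : ℕ, CharP k p → p = 0 ∨ 13 < p)
    (ζ : k) (hζ : IsPrimitiveRoot ζ 10)
    (M : Matrix (Fin 3) (Fin 3) k) (hM : IsUnit M) :
    (∃ (c : k) (j : ℕ), c ≠ 0 ∧
        M⁻¹ * Matrix.diagonal ![1, ζ ^ 2, ζ ^ 5] * M =
          c • (Matrix.diagonal ![1, ζ ^ 2, ζ ^ 5]) ^ j) ↔
    (∀ i j : Fin 3, i ≠ j → M i j = 0) := by
  set v : Fin 3 → k := ![1, ζ ^ 2, ζ ^ 5] with hvdef
  have hdet : IsUnit M.det := (Matrix.isUnit_iff_isUnit_det M).mp hM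
  have hpow : ∀ m : ℕ, ζ ^ m = 1 ↔ 10 ∣ m := fun m => hζ.pow_eq_one_iff_dvd m
  have hz10 : ζ ^ 10 = 1 := hζ.pow_eq_one
  have h5 : ζ ^ 5 = -1 := by
    have h2 : ζ ^ 5 * ζ ^ 5 = 1 := by
      rw [← pow_add]; exact hz10
    rcases mul_self_eq_one_iff.mp h2 with h | h
    · exact absurd ((hpow 5).mp h) (by norm_num)
    · exact h
  have hne : (-1 : k) ≠ 1 := by
    intro h
    exact absurd ((hpow 5).mp (h5.trans h)) (by norm_num)
  have h2ne : (ζ : k) ^ 2 ≠ 1 := fun h => absurd ((hpow 2).mp h) (by norm_num)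
  -- even power of ζ is never minus an even power of ζ
  have hL : ∀ m n : ℕ, ζ ^ (2 * m) ≠ -ζ ^ (2 * n) := by
    intro m n h
    have h5' := congrArg (· ^ 5) h
    simp only [← pow_mul] at h5'
    have e1 : ζ ^ (2 * m * 5) = 1 := by
      rw [hpow]; omega
    have e2 : (-ζ ^ (2 * n)) ^ 5 = -1 := by
      rw [neg_pow, ← pow_mul]
      have : ζ ^ (2 * n * 5) = 1 := by rw [hpow]; omega
      rw [this]; norm_num
    rw [e1, e2] at h5'
    exact hne h5'.symm
  have hv0 : v 0 = 1 := rfl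
  have hv1 : v 1 = ζ ^ 2 := rfl
  have hv2 : v 2 = ζ ^ 5 := rfl
  have hv : Function.Injective v := by
    intro i j hij
    have hi : i = 0 ∨ i = 1 ∨ i = 2 := by omega
    have hj : j = 0 ∨ j = 1 ∨ j = 2 := by omega
    rcases hi with rfl | rfl | rfl <;> rcases hj with rfl | rfl | rfl <;>
      simp only [hv0, hv1, hv2, h5] at hij <;>
      first
        | rfl
        | exact absurd hij h2ne
        | exact absurd hij.symm h2ne
        | exact absurd hij hne
        | exact absurd hij.symm hne
        | exact (hL 1 0 (by simpa using hij)).elim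
        | exact (hL 1 0 (by simpa using hij.symm)).elim
  constructor
  · rintro ⟨c, j, hc, h⟩
    set w : Fin 3 → k := fun q => c * v q ^ j with hwdef
    have hDM : Matrix.diagonal v * M = M * Matrix.diagonal w := by
      have hMinv : M * M⁻¹ = 1 := Matrix.mul_nonsing_inv M hdet
      have h' := congrArg (fun X => M * X) h
      rw [← mul_assoc, ← mul_assoc, hMinv, one_mul] at h'
      rw [h']
      have hsw : c • (Matrix.diagonal v) ^ j = Matrix.diagonal w := by
        rw [Matrix.diagonal_pow, ← Matrix.diagonal_smul]
        congr 1
      rw [hsw]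
    have key : ∀ i q, v i * M i q = M i q * w q := by
      intro i q
      have := congrFun (congrFun hDM i) q
      rwa [Matrix.diagonal_mul, Matrix.mul_diagonal] at this
    have keyne : ∀ i q, M i q ≠ 0 → v i = w q := by
      intro i q hMi
      have h1 : v i * M i q = w q * M i q := by rw [key i q, mul_comm]
      exact mul_right_cancel₀ hMi h1
    have hcol : ∀ q, ∃ i, M i q ≠ 0 := by
      intro q
      by_contra hcq
      push_neg at hcq
      exact hdet.ne_zero (Matrix.det_eq_zero_of_column_eq_zero q hcq)
    choose σ hσ using hcol
    have hwσ : ∀ q, v (σ q) = w q := fun q => keyne _ _ (hσ q)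
    have hsurj : Function.Surjective σ := by
      intro r
      by_contra hr
      push_neg at hr
      have hrow : ∀ q, M r q = 0 := by
        intro q
        by_contra hMr
        exact hr q (hv ((keyne r q hMr).trans (hwσ q).symm)).symm
      exact hdet.ne_zero (Matrix.det_eq_zero_of_row_eq_zero r hrow)
    have hinj : Function.Injective σ := Finite.injective_iff_surjective.mpr hsurj
    have e0 : v (σ 0) = c := by
      have h0 := hwσ 0
      rw [show w 0 = c * v 0 ^ j from rfl, hv0, one_pow, mul_one] at h0
      exact h0
    have e1 : v (σ 1) = c * ζ ^ (2 * j) := by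
      have h1 := hwσ 1
      rw [show w 1 = c * v 1 ^ j from rfl, hv1, ← pow_mul] at h1
      exact h1
    have e2 : v (σ 2) = c * (-1 : k) ^ j := by
      have h2 := hwσ 2
      rw [show w 2 = c * v 2 ^ j from rfl, hv2, h5] at h2
      exact h2
    rw [← e0] at e1 e2
    have hid : ∀ q, σ q = q := by
      rcases Nat.even_or_odd j with hj | hj
      · exfalso
        rw [hj.neg_one_pow, mul_one] at e2
        have : (2 : Fin 3) = 0 := hinj (hv e2)
        exact absurd this (by decide)
      · rw [hj.neg_one_pow, mul_neg_one] at e2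
        have ha : σ 0 = 0 ∨ σ 0 = 1 ∨ σ 0 = 2 := by omega
        rcases ha with ha | ha | ha
        · -- σ 0 = 0, then σ 2 = 2, σ 1 = 1
          have h22 : σ 2 = 2 := by
            apply hv
            rw [e2, ha, hv0, hv2, h5]
          have h11 : σ 1 = 1 := by
            have n0 : σ 1 ≠ 0 := fun hh => absurd (hinj (hh.trans ha.symm)) (by decide)
            have n2 : σ 1 ≠ 2 := fun hh => absurd (hinj (hh.trans h22.symm)) (by decide)
            omega
          intro q
          have hq : q = 0 ∨ q = 1 ∨ q = 2 := by omega
          rcases hq with rfl | rfl | rfl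
          · exact ha
          · exact h11
          · exact h22
        · exfalso
          rw [ha, hv1] at e2
          have hd : σ 2 = 0 ∨ σ 2 = 2 := by
            have : σ 2 ≠ 1 := fun hh => absurd (hinj (hh.trans ha.symm)) (by decide)
            omega
          rcases hd with hd | hd
          · rw [hd, hv0] at e2
            exact hL 0 1 (by simpa using e2)
          · rw [hd, hv2, h5] at e2
            exact h2ne (neg_injective e2).symm
        · exfalso
          rw [ha, hv2, h5, neg_neg] at e2
          have hd : σ 2 = 0 := by
            have n2 : σ 2 ≠ 2 := fun hh => absurd (hinj (hh.trans ha.symm)) (by decide)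
            have n1 : σ 2 ≠ 1 := by
              intro hh
              rw [hh, hv1] at e2
              exact h2ne e2
            omega
          have h11 : σ 1 = 1 := by
            have n0 : σ 1 ≠ 0 := fun hh => absurd (hinj (hh.trans hd.symm)) (by decide)
            have n2 : σ 1 ≠ 2 := fun hh => absurd (hinj (hh.trans ha.symm)) (by decide)
            omega
          rw [h11, hv1, ha, hv2, h5, neg_mul, one_mul] at e1
          exact hL 1 j (by simpa using e1)
    intro i q hiq
    by_contra hMiq
    have : i = σ q := hv ((keyne i q hMiq).trans (hwσ q).symm)
    rw [hid q] at this
    exact hiq this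
  · intro hdiag
    refine ⟨1, 1, one_ne_zero, ?_⟩
    have hMinv : M⁻¹ * M = 1 := Matrix.nonsing_inv_mul M hdet
    have hcomm : Matrix.diagonal v * M = M * Matrix.diagonal v := by
      ext i q
      rw [Matrix.diagonal_mul, Matrix.mul_diagonal]
      by_cases hiq : i = q
      · rw [hiq, mul_comm]
      · rw [hdiag i q hiq, mul_zero, zero_mul]
    rw [mul_assoc, hcomm, ← mul_assoc, hMinv, one_mul, one_smul, pow_one]
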